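/- Let A, B ⊂ ℝ be measurable sets of finite positive Lebesgue measure, with |A| = a and |B| = b. Then ∫_A ∫_B (x-y)² dy dx ≥ a·b·(a² + b²)/12, i.e. the double integral of (x-y)² over A × B is at least its value when A and B are intervals of lengths a and b centered at the same point. -/

import Mathlib

open MeasureTheory Real
open scoped ENNReal

noncomputable section

lemma bathtub (A : Set ℝ) (hA : MeasurableSet A) (a : ℝ) (ha : 0 < a)
    (hAa : volume A = ENNReal.ofReal a) (c : ℝ) :
    ENNReal.ofReal (a ^ 3 / 12) ≤ ∫⁻ x in A, ENNReal.ofReal ((x - c) ^ 2) := by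
  set I : Set ℝ := Set.Icc (c - a / 2) (c + a / 2) with hI
  have hImeas : MeasurableSet I := measurableSet_Icc
  have hIvol : volume I = ENNReal.ofReal a := by
    rw [hI, Real.volume_Icc]; ring_nf
  -- equal measures of differences
  have hfin : volume (A ∩ I) ≠ ⊤ := by
    refine ne_top_of_le_ne_top ?_ (measure_mono Set.inter_subset_left)
    rw [hAa]; exact ENNReal.ofReal_ne_top
  have hmeq : volume (A \ I) = volume (I \ A) := by
    have h1 : volume (A ∩ I) + volume (A \ I) = ENNReal.ofReal a := by
      rw [measure_inter_add_diff A hImeas, hAa]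
    have h2 : volume (A ∩ I) + volume (I \ A) = ENNReal.ofReal a := by
      rw [Set.inter_comm, measure_inter_add_diff I hA, hIvol]
    exact (ENNReal.add_right_inj hfin).1 (h1.trans h2.symm)
  have key : ∫⁻ x in I, ENNReal.ofReal ((x - c) ^ 2) ≤
      ∫⁻ x in A, ENNReal.ofReal ((x - c) ^ 2) := by
    rw [← lintegral_inter_add_diff (fun x => ENNReal.ofReal ((x - c) ^ 2)) A hImeas,
        ← lintegral_inter_add_diff (fun x => ENNReal.ofReal ((x - c) ^ 2)) I hA]
    rw [Set.inter_comm I A]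
    refine add_le_add le_rfl ?_
    calc ∫⁻ x in I \ A, ENNReal.ofReal ((x - c) ^ 2)
        ≤ ∫⁻ _ in I \ A, ENNReal.ofReal (a ^ 2 / 4) := by
          refine setLIntegral_mono' (hImeas.diff hA) fun x hx => ?_
          refine ENNReal.ofReal_le_ofReal ?_
          have h1 := hx.1.1; have h2 := hx.1.2
          have : |x - c| ≤ a / 2 := abs_le.2 ⟨by linarith, by linarith⟩
          calc (x - c) ^ 2 = |x - c| ^ 2 := (sq_abs _).symm
            _ ≤ (a / 2) ^ 2 := by
                have := abs_nonneg (x - c); nlinarith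
            _ = a ^ 2 / 4 := by ring
      _ = ENNReal.ofReal (a ^ 2 / 4) * volume (I \ A) := by
          rw [setLIntegral_const]
      _ = ENNReal.ofReal (a ^ 2 / 4) * volume (A \ I) := by rw [hmeq]
      _ = ∫⁻ _ in A \ I, ENNReal.ofReal (a ^ 2 / 4) := by rw [setLIntegral_const]
      _ ≤ ∫⁻ x in A \ I, ENNReal.ofReal ((x - c) ^ 2) := by
          refine setLIntegral_mono' (hA.diff hImeas) fun x hx => ?_
          refine ENNReal.ofReal_le_ofReal ?_
          have hx2 : x ∉ I := hx.2
          rw [hI, Set.mem_Icc, not_and_or] at hx2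
          have : a / 2 ≤ |x - c| := by
            rcases hx2 with h | h <;> push_neg at h <;> [skip; skip] <;>
              cases abs_cases (x - c) <;> nlinarith [abs_nonneg (x - c)]
          nlinarith [sq_abs (x - c), abs_nonneg (x - c)]
  refine le_trans (le_of_eq ?_) key
  have hint : IntegrableOn (fun x => (x - c) ^ 2) I volume :=
    (Continuous.integrableOn_Icc (by continuity))
  rw [← ofReal_integral_eq_lintegral_ofReal hint
    (Filter.Eventually.of_forall fun x => sq_nonneg _)]
  congr 1
  rw [MeasureTheory.integral_Icc_eq_integral_Ioc,
    ← intervalIntegral.integral_of_le (show c - a/2 ≤ c + a/2 by linarith)]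
  rw [intervalIntegral.integral_comp_sub_right (fun x => x ^ 2) c]
  rw [integral_pow]
  push_cast; ring

lemma integrable_id_of_sq (A : Set ℝ) (hfin : volume A ≠ ⊤)
    (h2 : IntegrableOn (fun x => x ^ 2) A volume) :
    IntegrableOn (fun x : ℝ => x) A volume := by
  have hone : IntegrableOn (fun _ : ℝ => (1:ℝ)) A volume :=
    integrableOn_const hfin
  have hsum : IntegrableOn (fun x : ℝ => x ^ 2 + 1) A volume := h2.add hone
  have hc : IntegrableOn (fun x : ℝ => 1/2 * (x ^ 2 + 1)) A volume := hsum.const_mul (1/2)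
  refine Integrable.mono hc measurable_id.aestronglyMeasurable
    (Filter.Eventually.of_forall fun x => ?_)
  simp only [Real.norm_eq_abs]
  rw [abs_of_nonneg (by positivity : (0:ℝ) ≤ 1/2 * (x ^ 2 + 1))]
  nlinarith [sq_nonneg (|x| - 1), sq_abs x, abs_nonneg x]

lemma quad_integral (S : Set ℝ) (s : ℝ) (hs : 0 < s)
    (hSs : volume S = ENNReal.ofReal s)
    (h2 : IntegrableOn (fun t => t ^ 2) S volume) (p q r : ℝ) :
    ∫ t in S, (p * t ^ 2 + q * t + r) =
      p * (∫ t in S, t ^ 2) + q * (∫ t in S, t) + r * s := by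
  have hfin : volume S ≠ ⊤ := by rw [hSs]; exact ENNReal.ofReal_ne_top
  have h1 : IntegrableOn (fun t : ℝ => t) S volume := integrable_id_of_sq S hfin h2
  have hpf : IntegrableOn (fun t : ℝ => p * t ^ 2) S volume := h2.const_mul p
  have hqf : IntegrableOn (fun t : ℝ => q * t) S volume := h1.const_mul q
  have hrf : IntegrableOn (fun _ : ℝ => r) S volume := integrableOn_const hfin
  have hpq : IntegrableOn (fun t : ℝ => p * t ^ 2 + q * t) S volume := hpf.add hqf
  rw [integral_add hpq hrf, integral_add hpf hqf, integral_const_mul,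
    integral_const_mul, setIntegral_const, Measure.real, hSs, ENNReal.toReal_ofReal hs.le, smul_eq_mul]
  ring

lemma quad_integrable (S : Set ℝ) (hfin : volume S ≠ ⊤)
    (h2 : IntegrableOn (fun t => t ^ 2) S volume) (p q r : ℝ) :
    IntegrableOn (fun t : ℝ => p * t ^ 2 + q * t + r) S volume := by
  have h1 : IntegrableOn (fun t : ℝ => t) S volume := integrable_id_of_sq S hfin h2
  exact ((h2.const_mul p).add (h1.const_mul q)).add (integrableOn_const hfin)

lemma moment_bound (A : Set ℝ) (hA : MeasurableSet A) (a : ℝ) (ha : 0 < a)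
    (hAa : volume A = ENNReal.ofReal a)
    (h2 : IntegrableOn (fun x => x ^ 2) A volume) :
    (∫ x in A, x) ^ 2 + a ^ 4 / 12 ≤ a * ∫ x in A, x ^ 2 := by
  have hfin : volume A ≠ ⊤ := by rw [hAa]; exact ENNReal.ofReal_ne_top
  set s1 := ∫ x in A, x with hs1
  set s2 := ∫ x in A, x ^ 2 with hs2
  set c := s1 / a with hc
  have hfun : (fun x : ℝ => (x - c) ^ 2) = fun x => 1 * x ^ 2 + (-(2 * c)) * x + c ^ 2 := by
    funext x; ring
  have hic : IntegrableOn (fun x => (x - c) ^ 2) A volume := by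
    rw [hfun]; exact quad_integrable A hfin h2 _ _ _
  have hb := bathtub A hA a ha hAa c
  rw [← ofReal_integral_eq_lintegral_ofReal hic
    (Filter.Eventually.of_forall fun x => sq_nonneg _)] at hb
  have hle : a ^ 3 / 12 ≤ ∫ x in A, (x - c) ^ 2 :=
    (ENNReal.ofReal_le_ofReal_iff (setIntegral_nonneg hA fun x _ => sq_nonneg _)).1 hb
  rw [hfun, quad_integral A a ha hAa h2] at hle
  have hca : c * a = s1 := by rw [hc]; field_simp
  nlinarith [hle, hca, sq_nonneg (c * a - s1)]

theorem interval_minimizes_interaction (A B : Set ℝ)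
    (hA : MeasurableSet A) (hB : MeasurableSet B)
    (a b : ℝ) (ha : 0 < a) (hb : 0 < b)
    (hAa : volume A = ENNReal.ofReal a) (hBb : volume B = ENNReal.ofReal b) :
    ENNReal.ofReal (a * b * (a ^ 2 + b ^ 2) / 12) ≤
      ∫⁻ x in A, ∫⁻ y in B, ENNReal.ofReal ((x - y) ^ 2) := by
  have hAfin : volume A ≠ ⊤ := by rw [hAa]; exact ENNReal.ofReal_ne_top
  have hBfin : volume B ≠ ⊤ := by rw [hBb]; exact ENNReal.ofReal_ne_top
  have hmsq : Measurable fun y : ℝ => ENNReal.ofReal (y ^ 2) :=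
    (measurable_id.pow_const 2).ennreal_ofReal
  by_cases hMB : (∫⁻ y in B, ENNReal.ofReal (y ^ 2)) = ⊤
  · have key : ∀ x : ℝ, (∫⁻ y in B, ENNReal.ofReal ((x - y) ^ 2)) = ⊤ := by
      intro x
      by_contra h
      have hpt : ∀ y : ℝ, ENNReal.ofReal (1/2) * ENNReal.ofReal (y ^ 2) ≤
          ENNReal.ofReal ((x - y) ^ 2) + ENNReal.ofReal (x ^ 2) := by
        intro y
        rw [← ENNReal.ofReal_mul (by norm_num), ← ENNReal.ofReal_add (sq_nonneg _) (sq_nonneg _)]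
        exact ENNReal.ofReal_le_ofReal (by nlinarith [sq_nonneg (2 * x - y)])
      have h1 : ENNReal.ofReal (1/2) * ∫⁻ y in B, ENNReal.ofReal (y ^ 2) ≤
          (∫⁻ y in B, ENNReal.ofReal ((x - y) ^ 2)) + ENNReal.ofReal (x ^ 2) * volume B := by
        rw [← lintegral_const_mul _ hmsq, ← setLIntegral_const]
        rw [← lintegral_add_right _ (measurable_const)]
        exact lintegral_mono fun y => hpt y
      rw [hMB, ENNReal.mul_top (by simp)] at h1
      exact (ENNReal.add_ne_top.2 ⟨h, ENNReal.mul_ne_top ENNReal.ofReal_ne_top hBfin⟩)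
        (top_le_iff.1 h1)
    have htop : (∫⁻ x in A, ∫⁻ y in B, ENNReal.ofReal ((x - y) ^ 2)) = ⊤ := by
      rw [lintegral_congr key, setLIntegral_const, hAa,
        ENNReal.top_mul (by simp [ENNReal.ofReal_eq_zero, not_le]; exact ha)]
    rw [htop]; exact le_top
  by_cases hMA : (∫⁻ x in A, ENNReal.ofReal (x ^ 2)) = ⊤
  · set MB := ∫⁻ y in B, ENNReal.ofReal (y ^ 2) with hMBdef
    have key : ∀ x : ℝ, ENNReal.ofReal (b / 2) * ENNReal.ofReal (x ^ 2) - MB ≤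
        ∫⁻ y in B, ENNReal.ofReal ((x - y) ^ 2) := by
      intro x
      rw [tsub_le_iff_right]
      have hpt : ∀ y : ℝ, ENNReal.ofReal (1/2) * ENNReal.ofReal (x ^ 2) ≤
          ENNReal.ofReal ((x - y) ^ 2) + ENNReal.ofReal (y ^ 2) := by
        intro y
        rw [← ENNReal.ofReal_mul (by norm_num), ← ENNReal.ofReal_add (sq_nonneg _) (sq_nonneg _)]
        exact ENNReal.ofReal_le_ofReal (by nlinarith [sq_nonneg (x - 2 * y)])
      calc ENNReal.ofReal (b / 2) * ENNReal.ofReal (x ^ 2)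
          = (ENNReal.ofReal (1/2) * ENNReal.ofReal (x ^ 2)) * volume B := by
            rw [hBb, ← ENNReal.ofReal_mul (by norm_num : (0:ℝ) ≤ 1/2),
              ← ENNReal.ofReal_mul (by positivity : (0:ℝ) ≤ 1/2 * x ^ 2),
              ← ENNReal.ofReal_mul (by linarith : (0:ℝ) ≤ b / 2)]
            congr 1; ring
        _ = ∫⁻ _ in B, ENNReal.ofReal (1/2) * ENNReal.ofReal (x ^ 2) := by
            rw [setLIntegral_const]
        _ ≤ ∫⁻ y in B, (ENNReal.ofReal ((x - y) ^ 2) + ENNReal.ofReal (y ^ 2)) :=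
            lintegral_mono fun y => hpt y
        _ = (∫⁻ y in B, ENNReal.ofReal ((x - y) ^ 2)) + MB :=
            lintegral_add_right _ hmsq
    have h2 : (∫⁻ x in A, (ENNReal.ofReal (b / 2) * ENNReal.ofReal (x ^ 2) - MB)) ≤
        ∫⁻ x in A, ∫⁻ y in B, ENNReal.ofReal ((x - y) ^ 2) :=
      lintegral_mono fun x => key x
    have h3 : (∫⁻ x in A, ENNReal.ofReal (b / 2) * ENNReal.ofReal (x ^ 2)) -
        (∫⁻ _ in A, MB) ≤
        ∫⁻ x in A, (ENNReal.ofReal (b / 2) * ENNReal.ofReal (x ^ 2) - MB) :=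
      lintegral_sub_le _ _ measurable_const
    have h4 : (∫⁻ x in A, ENNReal.ofReal (b / 2) * ENNReal.ofReal (x ^ 2)) = ⊤ := by
      rw [lintegral_const_mul _ hmsq, hMA, ENNReal.mul_top]
      simp only [ne_eq, ENNReal.ofReal_eq_zero, not_le]
      positivity
    have h5 : (∫⁻ _ in A, MB) ≠ ⊤ := by
      rw [setLIntegral_const]
      exact ENNReal.mul_ne_top hMB hAfin
    have h6 : (⊤ : ℝ≥0∞) ≤ ∫⁻ x in A, ∫⁻ y in B, ENNReal.ofReal ((x - y) ^ 2) := by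
      refine le_trans ?_ (le_trans h3 h2)
      rw [h4, ENNReal.sub_eq_top_iff.2 ⟨rfl, h5⟩]
    exact le_top.trans h6
  -- main case
  have hIA2 : IntegrableOn (fun x => x ^ 2) A volume := by
    refine ⟨(measurable_id.pow_const 2).aestronglyMeasurable, ?_⟩
    rw [hasFiniteIntegral_iff_ofReal (Filter.Eventually.of_forall fun x => sq_nonneg x)]
    exact lt_top_iff_ne_top.2 hMA
  have hIB2 : IntegrableOn (fun y => y ^ 2) B volume := by
    refine ⟨(measurable_id.pow_const 2).aestronglyMeasurable, ?_⟩
    rw [hasFiniteIntegral_iff_ofReal (Filter.Eventually.of_forall fun x => sq_nonneg x)]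
    exact lt_top_iff_ne_top.2 hMB
  set sA1 := ∫ x in A, x with hsA1
  set sA2 := ∫ x in A, x ^ 2 with hsA2
  set sB1 := ∫ y in B, y with hsB1
  set sB2 := ∫ y in B, y ^ 2 with hsB2
  have hBdecomp : ∀ x : ℝ, (fun y : ℝ => (x - y) ^ 2) =
      fun y => 1 * y ^ 2 + (-(2 * x)) * y + x ^ 2 := by
    intro x; funext y; ring
  have hIBx : ∀ x : ℝ, IntegrableOn (fun y => (x - y) ^ 2) B volume := by
    intro x; rw [hBdecomp x]; exact quad_integrable B hBfin hIB2 _ _ _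
  have hreal : ∀ x : ℝ, (∫ y in B, (x - y) ^ 2) = b * x ^ 2 - 2 * sB1 * x + sB2 := by
    intro x
    rw [hBdecomp x, quad_integral B b hb hBb hIB2]
    ring
  have hinner : ∀ x : ℝ, (∫⁻ y in B, ENNReal.ofReal ((x - y) ^ 2)) =
      ENNReal.ofReal (b * x ^ 2 - 2 * sB1 * x + sB2) := by
    intro x
    rw [← ofReal_integral_eq_lintegral_ofReal (hIBx x)
      (Filter.Eventually.of_forall fun y => sq_nonneg _), hreal x]
  have hgnn : ∀ x : ℝ, 0 ≤ b * x ^ 2 - 2 * sB1 * x + sB2 := by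
    intro x
    rw [← hreal x]
    exact setIntegral_nonneg hB fun y _ => sq_nonneg _
  have hgfun : (fun x : ℝ => b * x ^ 2 - 2 * sB1 * x + sB2) =
      fun x => b * x ^ 2 + (-(2 * sB1)) * x + sB2 := by
    funext x; ring
  have hIg : IntegrableOn (fun x : ℝ => b * x ^ 2 - 2 * sB1 * x + sB2) A volume := by
    rw [hgfun]; exact quad_integrable A hAfin hIA2 _ _ _
  have hmain : (∫⁻ x in A, ∫⁻ y in B, ENNReal.ofReal ((x - y) ^ 2)) =
      ENNReal.ofReal (∫ x in A, (b * x ^ 2 - 2 * sB1 * x + sB2)) := by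
    rw [lintegral_congr hinner]
    exact (ofReal_integral_eq_lintegral_ofReal hIg
      (Filter.Eventually.of_forall hgnn)).symm
  rw [hmain]
  have hgval : (∫ x in A, (b * x ^ 2 - 2 * sB1 * x + sB2)) =
      b * sA2 - 2 * sB1 * sA1 + sB2 * a := by
    rw [hgfun, quad_integral A a ha hAa hIA2]
    ring
  apply ENNReal.ofReal_le_ofReal
  rw [hgval]
  have hmA : sA1 ^ 2 + a ^ 4 / 12 ≤ a * sA2 := moment_bound A hA a ha hAa hIA2
  have hmB : sB1 ^ 2 + b ^ 4 / 12 ≤ b * sB2 := moment_bound B hB b hb hBb hIB2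
  nlinarith [sq_nonneg (b * sA1 - a * sB1), mul_pos ha hb,
    mul_le_mul_of_nonneg_left hmA (mul_pos hb hb).le,
    mul_le_mul_of_nonneg_left hmB (mul_pos ha ha).le]
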